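/- Let f(x; W₀,…,W_L) = W_L ⋯ W₀ x be a deep linear network with W_k ∈ ℝ^{n_{k+1}×n_k}, and let L(W₀,…,W_L) = Σᵢ ℓ(yᵢ, W_L⋯W₀ xᵢ) for a loss ℓ(y, z) that is convex and differentiable in z. If the architecture has no bottleneck, i.e. min_{0 ≤ k ≤ L+1} n_k = min{n₀, n_{L+1}}, then every local minimum of L is a global minimum of L. -/

import Mathlib

/-- The partial matrix products `W_k ⋯ W₀` of a deep linear network. -/
noncomputable def matProd (d : ℕ → ℕ)
    (W : (k : ℕ) → Fin (d (k + 1)) → Fin (d k) → ℝ) :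
    (k : ℕ) → Matrix (Fin (d (k + 1))) (Fin (d 0)) ℝ
  | 0 => Matrix.of (W 0)
  | (k + 1) => Matrix.of (W (k + 1)) * matProd d W k

/-- The loss `L(W₀,…,W_L) = Σᵢ ℓ(yᵢ, W_L ⋯ W₀ xᵢ)` of a deep linear network. -/
noncomputable def linNetLoss {α : Type*} (d : ℕ → ℕ) (L : ℕ) {N : ℕ}
    (x : Fin N → Fin (d 0) → ℝ) (y : Fin N → α)
    (ℓ : α → (Fin (d (L + 1)) → ℝ) → ℝ)
    (W : (k : ℕ) → Fin (d (k + 1)) → Fin (d k) → ℝ) : ℝ :=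
  ∑ i, ℓ (y i) ((matProd d W L).mulVec (x i))

namespace LocGlob
open Matrix

attribute [local instance] Matrix.normedAddCommGroup Matrix.normedSpace

lemma matProd_zero (d : ℕ → ℕ) (W : (k : ℕ) → Fin (d (k + 1)) → Fin (d k) → ℝ) :
    matProd d W 0 = Matrix.of (W 0) := rfl

lemma matProd_succ (d : ℕ → ℕ) (W : (k : ℕ) → Fin (d (k + 1)) → Fin (d k) → ℝ) (k : ℕ) :
    matProd d W (k + 1) = Matrix.of (W (k + 1)) * matProd d W k := rfl

lemma matProd_congr (d : ℕ → ℕ) (X Y : (k : ℕ) → Fin (d (k + 1)) → Fin (d k) → ℝ) (m : ℕ)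
    (h : ∀ k, k ≤ m → X k = Y k) : matProd d X m = matProd d Y m := by
  induction m with
  | zero => rw [matProd_zero, matProd_zero, h 0 le_rfl]
  | succ m ih =>
    rw [matProd_succ, matProd_succ, h (m+1) le_rfl, ih (fun k hk => h k (hk.trans (Nat.le_succ m)))]

lemma matProd_shift (d : ℕ → ℕ) (X : (k : ℕ) → Fin (d (k + 1)) → Fin (d k) → ℝ) (m : ℕ) :
    matProd d X (m + 1) =
      matProd (fun j => d (j + 1)) (fun k => X (k + 1)) m * Matrix.of (X 0) := by
  induction m with
  | zero => rfl
  | succ m ih =>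
    rw [matProd_succ, ih]
    rw [← Matrix.mul_assoc]
    rfl

-- rank-one algebra
lemma vecMulVec_mul {a b c : ℕ} (u : Fin a → ℝ) (w : Fin b → ℝ) (D : Matrix (Fin b) (Fin c) ℝ) :
    Matrix.vecMulVec u w * D = Matrix.vecMulVec u (w ᵥ* D) := by
  ext i j
  simp [Matrix.mul_apply, Matrix.vecMulVec_apply, Matrix.vecMul, dotProduct,
    Finset.mul_sum, mul_assoc]

lemma mul_vecMulVec {a b c : ℕ} (D : Matrix (Fin a) (Fin b) ℝ) (w : Fin b → ℝ) (v : Fin c → ℝ) :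
    D * Matrix.vecMulVec w v = Matrix.vecMulVec (D *ᵥ w) v := by
  ext i j
  simp [Matrix.mul_apply, Matrix.vecMulVec_apply, Matrix.mulVec, dotProduct,
    Finset.sum_mul, mul_assoc, mul_comm (v j)]

lemma vecMulVec_zero_right {a b : ℕ} (u : Fin a → ℝ) :
    Matrix.vecMulVec u (0 : Fin b → ℝ) = 0 := by
  ext i j; simp [Matrix.vecMulVec_apply]

lemma smul_vecMulVec {a b : ℕ} (t : ℝ) (u : Fin a → ℝ) (v : Fin b → ℝ) :
    Matrix.vecMulVec (t • u) v = t • Matrix.vecMulVec u v := by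
  ext i j; simp [Matrix.vecMulVec_apply, mul_assoc]

-- continuous linear maps
noncomputable def mulLeftCLM {a b c : ℕ} (T : Matrix (Fin a) (Fin b) ℝ) :
    Matrix (Fin b) (Fin c) ℝ →L[ℝ] Matrix (Fin a) (Fin c) ℝ :=
  LinearMap.toContinuousLinearMap
    { toFun := fun M => T * M
      map_add' := fun M N => Matrix.mul_add T M N
      map_smul' := fun t M => (Matrix.mul_smul T t M) }

@[simp] lemma mulLeftCLM_apply {a b c : ℕ} (T : Matrix (Fin a) (Fin b) ℝ)
    (M : Matrix (Fin b) (Fin c) ℝ) : mulLeftCLM T M = T * M := rfl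

noncomputable def mulRightCLM {a b c : ℕ} (T : Matrix (Fin b) (Fin c) ℝ) :
    Matrix (Fin a) (Fin b) ℝ →L[ℝ] Matrix (Fin a) (Fin c) ℝ :=
  LinearMap.toContinuousLinearMap
    { toFun := fun M => M * T
      map_add' := fun M N => Matrix.add_mul M N T
      map_smul' := fun t M => (Matrix.smul_mul t M T) }

@[simp] lemma mulRightCLM_apply {a b c : ℕ} (T : Matrix (Fin b) (Fin c) ℝ)
    (M : Matrix (Fin a) (Fin b) ℝ) : mulRightCLM T M = M * T := rfl



variable {a b : ℕ}

lemma matrix_eq_sum_single (M : Matrix (Fin a) (Fin b) ℝ) :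
    M = ∑ i, ∑ j, M i j • Matrix.vecMulVec (Pi.single i (1:ℝ)) (Pi.single j (1:ℝ)) := by
  ext p q
  simp only [Matrix.sum_apply, Matrix.smul_apply, Matrix.vecMulVec_apply, Pi.single_apply,
    smul_eq_mul, mul_ite, ite_mul, mul_one, mul_zero, zero_mul, one_mul]
  simp [Finset.sum_ite_eq]

noncomputable def Ghat {a b : ℕ} (G : Matrix (Fin a) (Fin b) ℝ →L[ℝ] ℝ) : Matrix (Fin a) (Fin b) ℝ :=
  fun i j => G (Matrix.vecMulVec (Pi.single i (1:ℝ)) (Pi.single j (1:ℝ)))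

lemma G_apply (G : Matrix (Fin a) (Fin b) ℝ →L[ℝ] ℝ) (M : Matrix (Fin a) (Fin b) ℝ) :
    G M = ∑ i, ∑ j, M i j * Ghat G i j := by
  conv_lhs => rw [matrix_eq_sum_single M]
  rw [map_sum]
  refine Finset.sum_congr rfl fun i _ => ?_
  rw [map_sum]
  refine Finset.sum_congr rfl fun j _ => ?_
  rw [G.map_smul]
  rfl

lemma G_vecMulVec (G : Matrix (Fin a) (Fin b) ℝ →L[ℝ] ℝ) (u : Fin a → ℝ) (v : Fin b → ℝ) :
    G (Matrix.vecMulVec u v) = ∑ i, ∑ j, u i * v j * Ghat G i j := by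
  rw [G_apply]
  simp [Matrix.vecMulVec_apply]

lemma G_row (G : Matrix (Fin a) (Fin b) ℝ →L[ℝ] ℝ) (α : Fin a) (v : Fin b → ℝ) :
    G (Matrix.vecMulVec (Pi.single α (1:ℝ)) v) = ∑ j, v j * Ghat G α j := by
  rw [G_vecMulVec]
  rw [Finset.sum_eq_single α]
  · simp
  · intro i _ hip
    simp [Pi.single_apply, hip]
  · simp

lemma G_col (G : Matrix (Fin a) (Fin b) ℝ →L[ℝ] ℝ) (β : Fin b) (v : Fin a → ℝ) :
    G (Matrix.vecMulVec v (Pi.single β (1:ℝ))) = ∑ i, v i * Ghat G i β := by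
  rw [G_vecMulVec, Finset.sum_comm, Finset.sum_eq_single β]
  · simp
  · intro j _ hip
    simp [Pi.single_apply, hip]
  · simp

lemma G_ne_zero_iff (G : Matrix (Fin a) (Fin b) ℝ →L[ℝ] ℝ) :
    G ≠ 0 ↔ ∃ i j, Ghat G i j ≠ 0 := by
  constructor
  · intro hG
    by_contra h
    push_neg at h
    apply hG
    ext M
    rw [G_apply]
    simp [h]
  · rintro ⟨i, j, hij⟩ h0
    apply hij
    simp [Ghat, h0]

lemma zero_of_vecMulVec_zero (G : Matrix (Fin a) (Fin b) ℝ →L[ℝ] ℝ)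
    (h : ∀ (u : Fin a → ℝ) (v : Fin b → ℝ), G (Matrix.vecMulVec u v) = 0) : G = 0 := by
  by_contra hG
  obtain ⟨i, j, hij⟩ := (G_ne_zero_iff G).1 hG
  exact hij (h _ _)

lemma exists_left_ann (hba : b ≤ a) (C : Matrix (Fin a) (Fin b) ℝ) (g₀ : Fin b → ℝ)
    (hg : g₀ ≠ 0) (h : ∀ β, ∑ j, C β j * g₀ j = 0) :
    ∃ w : Fin a → ℝ, w ≠ 0 ∧ ∀ j, (∑ β, w β * C β j) = 0 := by
  classical
  set f : (Fin b → ℝ) →ₗ[ℝ] ℝ :=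
    { toFun := fun v => ∑ j, v j * g₀ j
      map_add' := by intro u v; simp [add_mul, Finset.sum_add_distrib]
      map_smul' := by intro t v; simp [mul_assoc, Finset.mul_sum] } with hf
  set Φ : (Fin a → ℝ) →ₗ[ℝ] (Fin b → ℝ) :=
    { toFun := fun w j => ∑ β, w β * C β j
      map_add' := by intro u v; funext j; simp [add_mul, Finset.sum_add_distrib]
      map_smul' := by intro t v; funext j; simp [mul_assoc, Finset.mul_sum] } with hΦ
  have hrange : ∀ w, Φ w ∈ LinearMap.ker f := by
    intro w
    simp only [LinearMap.mem_ker, hf, hΦ, LinearMap.coe_mk, AddHom.coe_mk]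
    have heq : ∑ j, (∑ β, w β * C β j) * g₀ j = ∑ β, w β * ∑ j, C β j * g₀ j := by
      calc ∑ j, (∑ β, w β * C β j) * g₀ j
          = ∑ j, ∑ β, w β * (C β j * g₀ j) := by
            refine Finset.sum_congr rfl fun j _ => ?_
            rw [Finset.sum_mul]
            exact Finset.sum_congr rfl fun β _ => by ring
        _ = ∑ β, ∑ j, w β * (C β j * g₀ j) := Finset.sum_comm
        _ = ∑ β, w β * ∑ j, C β j * g₀ j := by
            exact Finset.sum_congr rfl fun β _ => (Finset.mul_sum _ _ _).symm
    rw [heq]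
    simp [h]
  have hS : (∑ j, g₀ j * g₀ j) ≠ 0 := by
    have : g₀ ⬝ᵥ g₀ ≠ 0 := fun h0 => hg (dotProduct_self_eq_zero.mp h0)
    exact this
  have hker : LinearMap.ker Φ ≠ ⊥ := by
    intro hker
    have hinj : Function.Injective Φ := LinearMap.ker_eq_bot.mp hker
    let Φ' : (Fin a → ℝ) →ₗ[ℝ] LinearMap.ker f := Φ.codRestrict (LinearMap.ker f) hrange
    have hinj' : Function.Injective Φ' := by
      intro u v huv
      exact hinj (congrArg Subtype.val huv)
    have h1 : Module.finrank ℝ (Fin a → ℝ) ≤ Module.finrank ℝ (LinearMap.ker f) :=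
      LinearMap.finrank_le_finrank_of_injective hinj'
    have hfs : LinearMap.range f = ⊤ := by
      rw [LinearMap.range_eq_top]
      intro r
      refine ⟨(r / (∑ j, g₀ j * g₀ j)) • g₀, ?_⟩
      rw [f.map_smul]
      show (r / (∑ j, g₀ j * g₀ j)) * (∑ j, g₀ j * g₀ j) = r
      exact div_mul_cancel₀ r hS
    have h2 := LinearMap.finrank_range_add_finrank_ker f
    rw [hfs, finrank_top, Module.finrank_self, Module.finrank_fintype_fun_eq_card,
      Fintype.card_fin] at h2
    rw [Module.finrank_fintype_fun_eq_card, Fintype.card_fin] at h1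
    omega
  obtain ⟨w, hw, hw0⟩ := (Submodule.ne_bot_iff _).mp hker
  refine ⟨w, hw0, fun j => ?_⟩
  have := LinearMap.mem_ker.mp hw
  exact congrFun this j




-- local min on a ball gives IsLocalMin
lemma isLocalMin_of_ball {E : Type*} [NormedAddCommGroup E] (f : E → ℝ) (p : E) (ε : ℝ)
    (hε : 0 < ε) (h : ∀ q, ‖q - p‖ < ε → f p ≤ f q) : IsLocalMin f p := by
  filter_upwards [Metric.ball_mem_nhds p hε] with q hq
  exact h q (by rw [← dist_eq_norm]; exact hq)

-- first order condition through a CLM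
lemma clm_cond {E F : Type*} [NormedAddCommGroup E] [NormedSpace ℝ E]
    [NormedAddCommGroup F] [NormedSpace ℝ F]
    (g : F → ℝ) (hg : Differentiable ℝ g) (φ : E →L[ℝ] F) (p : E)
    (hmin : IsLocalMin (fun e => g (φ e)) p) : ∀ e, fderiv ℝ g (φ p) (φ e) = 0 := by
  have h1 : HasFDerivAt (fun e => g (φ e)) ((fderiv ℝ g (φ p)).comp φ) p :=
    ((hg (φ p)).hasFDerivAt).comp p φ.hasFDerivAt
  have h2 := hmin.hasFDerivAt_eq_zero h1
  intro e
  have := congrArg (fun (T : E →L[ℝ] ℝ) => T e) h2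
  simpa using this


lemma coreA (d : ℕ → ℕ) (L : ℕ) (hd : ∀ k, 1 ≤ k → k ≤ L → d 0 ≤ d k)
    (g : Matrix (Fin (d (L + 1))) (Fin (d 0)) ℝ → ℝ) (hg : Differentiable ℝ g)
    (W : (k : ℕ) → Fin (d (k + 1)) → Fin (d k) → ℝ) (ε : ℝ) (hε : 0 < ε)
    (hmin : ∀ X : (k : ℕ) → Fin (d (k + 1)) → Fin (d k) → ℝ,
      (∀ k, k ≤ L → ∀ i j, |X k i j - W k i j| < ε) →
      g (matProd d W L) ≤ g (matProd d X L)) :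
    fderiv ℝ g (matProd d W L) = 0 := by
  induction L with
  | zero =>
    have hlm : IsLocalMin g (matProd d W 0) := by
      apply isLocalMin_of_ball g _ ε hε
      intro M hM
      have hball : ∀ i j, |M i j - W 0 i j| < ε := by
        intro i j
        have h1 : ‖(M - matProd d W 0) i j‖ ≤ ‖M - matProd d W 0‖ :=
          norm_entry_le_entrywise_sup_norm _
        have h2 : (M - matProd d W 0) i j = M i j - W 0 i j := rfl
        rw [h2, Real.norm_eq_abs] at h1
        exact lt_of_le_of_lt h1 hM
      have h2 := hmin (Function.update W 0 (Matrix.of.symm M))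
        (fun k hk => by
          obtain rfl := Nat.le_zero.mp hk
          rw [Function.update_self]
          exact hball)
      have h3 : matProd d (Function.update W 0 (Matrix.of.symm M)) 0 = M := by
        rw [matProd_zero, Function.update_self]
        rfl
      rw [h3] at h2
      exact h2
    exact hlm.hasFDerivAt_eq_zero (hg _).hasFDerivAt
  | succ L ih =>
    set A := matProd d W (L + 1) with hA
    set C := matProd d W L with hC
    set G := fderiv ℝ g A with hGdef
    show G = 0
    by_cases hG0 : G = 0
    · exact hG0
    exfalso
    -- Step 1 : top-layer first-order condition
    have hlmtop : IsLocalMin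
        (fun Y : Matrix (Fin (d (L + 2))) (Fin (d (L + 1))) ℝ => g ((mulRightCLM C) Y))
        (Matrix.of (W (L + 1))) := by
      apply isLocalMin_of_ball _ _ ε hε
      intro Y hY
      simp only [mulRightCLM_apply]
      have h2 := hmin (Function.update W (L + 1) (Matrix.of.symm Y)) ?_
      · have h3 : matProd d (Function.update W (L + 1) (Matrix.of.symm Y)) (L + 1) = Y * C := by
          rw [matProd_succ, Function.update_self]
          have h4 : matProd d (Function.update W (L + 1) (Matrix.of.symm Y)) L = C :=
            matProd_congr d _ W L (fun k hk => Function.update_of_ne (by omega) _ _)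
          rw [h4]
          rfl
        rw [h3] at h2
        exact h2
      · intro k hk i j
        rcases Nat.lt_or_ge k (L + 1) with hlt | hge
        · rw [Function.update_of_ne (by omega)]
          simpa using hε
        · have hkeq : k = L + 1 := by omega
          subst hkeq
          rw [Function.update_self]
          have h1 : ‖(Y - Matrix.of (W (L + 1))) i j‖ ≤ ‖Y - Matrix.of (W (L + 1))‖ :=
            norm_entry_le_entrywise_sup_norm _
          have h2 : (Y - Matrix.of (W (L + 1))) i j = Matrix.of.symm Y i j - W (L + 1) i j := rfl
          rw [h2, Real.norm_eq_abs] at h1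
          exact lt_of_le_of_lt h1 hY
    have topcond : ∀ Δ : Matrix (Fin (d (L + 2))) (Fin (d (L + 1))) ℝ, G (Δ * C) = 0 := by
      have h0 := clm_cond _ hg (mulRightCLM C) (Matrix.of (W (L + 1))) hlmtop
      intro Δ
      have h1 := h0 Δ
      change fderiv ℝ g (Matrix.of (W (L + 1)) * C) (Δ * C) = 0 at h1
      exact h1
    -- Step 2 : annihilating vector w
    obtain ⟨α₀, β₀', hα₀⟩ := (G_ne_zero_iff G).1 hG0
    have hg₀ : (fun j => Ghat G α₀ j) ≠ 0 := by
      intro h0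
      exact hα₀ (congrFun h0 β₀')
    have hCrow : ∀ β, ∑ j, C β j * Ghat G α₀ j = 0 := by
      intro β
      have h1 := topcond (Matrix.vecMulVec (Pi.single α₀ (1 : ℝ)) (Pi.single β (1 : ℝ)))
      rw [vecMulVec_mul] at h1
      have h2 : (Pi.single β (1 : ℝ)) ᵥ* C = C β := by
        funext j
        simp [Matrix.vecMul, dotProduct, Pi.single_apply]
      rw [h2, G_row] at h1
      exact h1
    obtain ⟨w, hwne, hwC⟩ :=
      exists_left_ann (hd (L + 1) (by omega) (by omega)) C (fun j => Ghat G α₀ j) hg₀ hCrow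
    have hwdot : (∑ β, w β * w β) ≠ 0 := by
      intro h0
      exact hwne (dotProduct_self_eq_zero.mp h0)
    -- Step 3 : subnetwork family
    set ε' := ε / (‖w‖ + 1) with hε'def
    have hε'pos : 0 < ε' := div_pos hε (by positivity)
    have hsub : ∀ c : Fin (d (L + 2)) → ℝ, ‖c‖ < ε' →
        ∀ D : Matrix (Fin (d (L + 1))) (Fin (d 0)) ℝ,
          G ((Matrix.of (W (L + 1)) + Matrix.vecMulVec c w) * D) = 0 := by
      intro c hcn
      set T : Matrix (Fin (d (L + 2))) (Fin (d (L + 1))) ℝ :=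
        Matrix.of (W (L + 1)) + Matrix.vecMulVec c w with hT
      have hTC : T * C = A := by
        rw [hT, Matrix.add_mul, vecMulVec_mul]
        have hwv : w ᵥ* C = 0 := by
          funext j
          exact hwC j
        rw [hwv, vecMulVec_zero_right, add_zero]
        rfl
      have hgc : Differentiable ℝ (fun M : Matrix (Fin (d (L + 1))) (Fin (d 0)) ℝ =>
          g ((mulLeftCLM T) M)) := hg.comp (mulLeftCLM T).differentiable
      have hminc : ∀ X : (k : ℕ) → Fin (d (k + 1)) → Fin (d k) → ℝ,
          (∀ k, k ≤ L → ∀ i j, |X k i j - W k i j| < ε) →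
          (fun M => g ((mulLeftCLM T) M)) (matProd d W L) ≤
          (fun M => g ((mulLeftCLM T) M)) (matProd d X L) := by
        intro X hX
        simp only [mulLeftCLM_apply]
        have h3 : matProd d (Function.update X (L + 1) (Matrix.of.symm T)) (L + 1) =
            T * matProd d X L := by
          rw [matProd_succ, Function.update_self]
          have h4 : matProd d (Function.update X (L + 1) (Matrix.of.symm T)) L = matProd d X L :=
            matProd_congr d _ X L (fun k hk => Function.update_of_ne (by omega) _ _)
          rw [h4]
          rfl
        have h4 := hmin (Function.update X (L + 1) (Matrix.of.symm T)) ?_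
        · rw [h3] at h4
          have h5 : g (T * C) = g A := by rw [hTC]
          calc g (T * C) = g A := h5
            _ ≤ g (T * matProd d X L) := h4
        · intro k hk i j
          rcases Nat.lt_or_ge k (L + 1) with hlt | hge
          · rw [Function.update_of_ne (by omega)]
            exact hX k (by omega) i j
          · have hkeq : k = L + 1 := by omega
            subst hkeq
            rw [Function.update_self]
            have h6 : Matrix.of.symm T i j - W (L + 1) i j = c i * w j := by
              simp [hT, Matrix.add_apply, Matrix.vecMulVec_apply]
            rw [h6, abs_mul]
            have hci : |c i| ≤ ‖c‖ := by
              have := norm_le_pi_norm c i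
              simpa using this
            have hwj : |w j| ≤ ‖w‖ + 1 := by
              have := norm_le_pi_norm w j
              simp only [Real.norm_eq_abs] at this
              linarith
            calc |c i| * |w j| ≤ ‖c‖ * (‖w‖ + 1) := by
                  apply mul_le_mul hci hwj (abs_nonneg _)
                  exact norm_nonneg _
              _ < ε' * (‖w‖ + 1) := by
                  apply mul_lt_mul_of_pos_right hcn
                  positivity
              _ = ε := by
                  rw [hε'def]
                  field_simp
      have hz := ih (fun k h1 h2 => hd k h1 (by omega)) _ hgc hminc
      intro D
      have h5 : HasFDerivAt (fun M : Matrix (Fin (d (L + 1))) (Fin (d 0)) ℝ =>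
          g ((mulLeftCLM T) M)) ((fderiv ℝ g ((mulLeftCLM T) C)).comp (mulLeftCLM T)) C :=
        ((hg _).hasFDerivAt).comp _ (mulLeftCLM T).hasFDerivAt
      have h6 := h5.fderiv
      rw [h6] at hz
      have h7 := congrArg (fun (T' : Matrix (Fin (d (L + 1))) (Fin (d 0)) ℝ →L[ℝ] ℝ) => T' D) hz
      simp only [ContinuousLinearMap.comp_apply, ContinuousLinearMap.zero_apply,
        mulLeftCLM_apply] at h7
      rw [hTC] at h7
      exact h7
    -- Step 4 : rank ones vanish
    have hrank1 : ∀ (u : Fin (d (L + 2)) → ℝ) (v : Fin (d 0) → ℝ),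
        G (Matrix.vecMulVec u v) = 0 := by
      intro u v
      set t : ℝ := ε' / 2 / (‖u‖ + 1) with htdef
      have htpos : 0 < t := by positivity
      set c : Fin (d (L + 2)) → ℝ := t • u with hcdef
      have hcnorm : ‖c‖ < ε' := by
        rw [hcdef, norm_smul, Real.norm_eq_abs, abs_of_pos htpos]
        have h1 : t * ‖u‖ < t * (‖u‖ + 1) := by
          apply mul_lt_mul_of_pos_left _ htpos
          linarith
        have h2 : t * (‖u‖ + 1) = ε' / 2 := by
          rw [htdef]
          field_simp
        have : ε' / 2 < ε' := by linarith
        linarith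
      set D : Matrix (Fin (d (L + 1))) (Fin (d 0)) ℝ :=
        Matrix.of (fun β j => w β / (∑ γ, w γ * w γ) * v j) with hDdef
      have hwD : w ᵥ* D = v := by
        funext j
        show ∑ β, w β * (w β / (∑ γ, w γ * w γ) * v j) = v j
        rw [show ∑ β, w β * (w β / (∑ γ, w γ * w γ) * v j)
            = (∑ β, w β * w β) / (∑ γ, w γ * w γ) * v j from by
          rw [Finset.sum_div, Finset.sum_mul]
          exact Finset.sum_congr rfl fun β _ => by ring]
        rw [div_self hwdot, one_mul]
      have h1 := hsub c hcnorm D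
      have h0 := hsub 0 (by simpa using hε'pos) D
      have h00 : Matrix.vecMulVec (0 : Fin (d (L + 2)) → ℝ) w = 0 := by
        ext i j
        simp [Matrix.vecMulVec_apply]
      rw [h00, add_zero] at h0
      rw [Matrix.add_mul, vecMulVec_mul, map_add, h0, zero_add, hwD] at h1
      rw [hcdef, smul_vecMulVec, G.map_smul, smul_eq_mul] at h1
      have := mul_eq_zero.mp h1
      rcases this with h | h
      · exact absurd h (ne_of_gt htpos)
      · exact h
    exact hG0 (zero_of_vecMulVec_zero G hrank1)

lemma smul_vecMulVec_right {a b : ℕ} (t : ℝ) (u : Fin a → ℝ) (v : Fin b → ℝ) :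
    Matrix.vecMulVec u (t • v) = t • Matrix.vecMulVec u v := by
  ext i j
  simp [Matrix.vecMulVec_apply]
  ring

lemma coreB (L : ℕ) (d : ℕ → ℕ) (hd : ∀ k, 1 ≤ k → k ≤ L → d (L + 1) ≤ d k)
    (g : Matrix (Fin (d (L + 1))) (Fin (d 0)) ℝ → ℝ) (hg : Differentiable ℝ g)
    (W : (k : ℕ) → Fin (d (k + 1)) → Fin (d k) → ℝ) (ε : ℝ) (hε : 0 < ε)
    (hmin : ∀ X : (k : ℕ) → Fin (d (k + 1)) → Fin (d k) → ℝ,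
      (∀ k, k ≤ L → ∀ i j, |X k i j - W k i j| < ε) →
      g (matProd d W L) ≤ g (matProd d X L)) :
    fderiv ℝ g (matProd d W L) = 0 := by
  induction L generalizing d with
  | zero => exact coreA d 0 (fun k h1 h2 => by omega) g hg W ε hε hmin
  | succ L ih =>
    set A := matProd d W (L + 1) with hA
    set S := matProd (fun j => d (j + 1)) (fun k => W (k + 1)) L with hS
    have hshift : A = S * Matrix.of (W 0) := matProd_shift d W L
    set G := fderiv ℝ g A with hGdef
    show G = 0
    by_cases hG0 : G = 0
    · exact hG0
    exfalso
    -- Step 1 : bottom-layer first-order condition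
    have hlmbot : IsLocalMin
        (fun Y : Matrix (Fin (d 1)) (Fin (d 0)) ℝ => g ((mulLeftCLM S) Y))
        (Matrix.of (W 0)) := by
      apply isLocalMin_of_ball _ _ ε hε
      intro Y hY
      simp only [mulLeftCLM_apply]
      have h2 := hmin (Function.update W 0 (Matrix.of.symm Y)) ?_
      · have h3 : matProd d (Function.update W 0 (Matrix.of.symm Y)) (L + 1) = S * Y := by
          rw [matProd_shift]
          have h4 : (fun k => Function.update W 0 (Matrix.of.symm Y) (k + 1)) =
              (fun k => W (k + 1)) := by
            funext k
            exact Function.update_of_ne (by omega) _ _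
          rw [h4, Function.update_self]
          rfl
        rw [h3] at h2
        rw [← hshift]
        exact h2
      · intro k hk i j
        rcases Nat.eq_zero_or_pos k with hk0 | hkpos
        · subst hk0
          rw [Function.update_self]
          have h1 : ‖(Y - Matrix.of (W 0)) i j‖ ≤ ‖Y - Matrix.of (W 0)‖ :=
            norm_entry_le_entrywise_sup_norm _
          have h2' : (Y - Matrix.of (W 0)) i j = Matrix.of.symm Y i j - W 0 i j := rfl
          rw [h2', Real.norm_eq_abs] at h1
          exact lt_of_le_of_lt h1 hY
        · rw [Function.update_of_ne (by omega)]
          simpa using hε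
    have botcond : ∀ Δ : Matrix (Fin (d 1)) (Fin (d 0)) ℝ, G (S * Δ) = 0 := by
      have h0 := clm_cond _ hg (mulLeftCLM S) (Matrix.of (W 0)) hlmbot
      intro Δ
      have h1 := h0 Δ
      change fderiv ℝ g (S * Matrix.of (W 0)) (S * Δ) = 0 at h1
      rw [← hshift] at h1
      exact h1
    -- Step 2 : annihilating vector w with S *ᵥ w = 0
    obtain ⟨α₀, β₀, hα₀⟩ := (G_ne_zero_iff G).1 hG0
    have hg₀ : (fun i => Ghat G i β₀) ≠ 0 := by
      intro h0
      exact hα₀ (congrFun h0 α₀)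
    have hScol : ∀ γ : Fin (d 1), ∑ i, S i γ * Ghat G i β₀ = 0 := by
      intro γ
      have h1 := botcond (Matrix.vecMulVec (Pi.single γ (1 : ℝ)) (Pi.single β₀ (1 : ℝ)))
      rw [mul_vecMulVec] at h1
      have h2 : S *ᵥ Pi.single γ (1 : ℝ) = fun i => S i γ := by
        funext i
        simp [Matrix.mulVec, dotProduct, Pi.single_apply]
      rw [h2, G_col] at h1
      exact h1
    obtain ⟨w, hwne, hwS'⟩ :=
      exists_left_ann (hd 1 (by omega) (by omega)) Sᵀ (fun i => Ghat G i β₀) hg₀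
        (fun γ => by
          have := hScol γ
          simpa [Matrix.transpose_apply] using this)
    have hwS : S *ᵥ w = 0 := by
      funext i
      have := hwS' i
      simp only [Matrix.transpose_apply] at this
      show ∑ γ, S i γ * w γ = 0
      rw [← this]
      exact Finset.sum_congr rfl fun γ _ => by ring
    have hwdot : (∑ β, w β * w β) ≠ 0 := by
      intro h0
      exact hwne (dotProduct_self_eq_zero.mp h0)
    -- Step 3 : subnetwork family
    set ε' := ε / (‖w‖ + 1) with hε'def
    have hε'pos : 0 < ε' := div_pos hε (by positivity)
    have hsub : ∀ c : Fin (d 0) → ℝ, ‖c‖ < ε' →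
        ∀ D : Matrix (Fin (d (L + 2))) (Fin (d 1)) ℝ,
          G (D * (Matrix.of (W 0) + Matrix.vecMulVec w c)) = 0 := by
      intro c hcn
      set T : Matrix (Fin (d 1)) (Fin (d 0)) ℝ :=
        Matrix.of (W 0) + Matrix.vecMulVec w c with hT
      have hST : S * T = A := by
        rw [hT, Matrix.mul_add, mul_vecMulVec, hwS]
        have h00 : Matrix.vecMulVec (0 : Fin (d (L + 2)) → ℝ) c = 0 := by
          ext i j
          simp [Matrix.vecMulVec_apply]
        rw [h00, add_zero, ← hshift]
      have hgc : Differentiable ℝ (fun M : Matrix (Fin (d (L + 2))) (Fin (d 1)) ℝ =>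
          g ((mulRightCLM T) M)) := hg.comp (mulRightCLM T).differentiable
      have hminc : ∀ X : (k : ℕ) → Fin (d (k + 1 + 1)) → Fin (d (k + 1)) → ℝ,
          (∀ k, k ≤ L → ∀ i j, |X k i j - W (k + 1) i j| < ε) →
          (fun M => g ((mulRightCLM T) M)) (matProd (fun j => d (j + 1)) (fun k => W (k + 1)) L) ≤
          (fun M => g ((mulRightCLM T) M)) (matProd (fun j => d (j + 1)) X L) := by
        intro X hX
        simp only [mulRightCLM_apply]
        have hXX : ∀ M : Matrix (Fin (d (L + 2))) (Fin (d 1)) ℝ, M * T = M * T := fun _ => rfl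
        -- extended weights
        let X'' : (k : ℕ) → Fin (d (k + 1)) → Fin (d k) → ℝ := fun k =>
          match k with
          | 0 => Matrix.of.symm T
          | (m + 1) => X m
        have h3 : matProd d X'' (L + 1) = matProd (fun j => d (j + 1)) X L * T := by
          rw [matProd_shift]
          have h4 : (fun k => X'' (k + 1)) = X := by
            funext k
            rfl
          rw [h4]
          rfl
        have h4 := hmin X'' ?_
        · rw [h3] at h4
          have h5 : g (S * T) = g A := by rw [hST]
          calc g (S * T) = g A := h5
            _ ≤ g (matProd (fun j => d (j + 1)) X L * T) := h4
        · intro k hk i j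
          rcases Nat.eq_zero_or_pos k with hk0 | hkpos
          · subst hk0
            show |Matrix.of.symm T i j - W 0 i j| < ε
            have h6 : Matrix.of.symm T i j - W 0 i j = w i * c j := by
              simp [hT, Matrix.add_apply, Matrix.vecMulVec_apply]
            rw [h6, abs_mul]
            have hci : |c j| ≤ ‖c‖ := by
              have := norm_le_pi_norm c j
              simpa using this
            have hwj : |w i| ≤ ‖w‖ + 1 := by
              have := norm_le_pi_norm w i
              simp only [Real.norm_eq_abs] at this
              linarith
            calc |w i| * |c j| ≤ (‖w‖ + 1) * ‖c‖ := by
                  apply mul_le_mul hwj hci (abs_nonneg _)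
                  positivity
              _ < (‖w‖ + 1) * ε' := by
                  apply mul_lt_mul_of_pos_left hcn
                  positivity
              _ = ε := by
                  rw [hε'def]
                  field_simp
          · obtain ⟨m, rfl⟩ : ∃ m, k = m + 1 := ⟨k - 1, by omega⟩
            exact hX m (by omega) i j
      have hz := ih (fun j => d (j + 1)) (fun k h1 h2 => hd (k + 1) (by omega) (by omega))
        _ hgc (fun k => W (k + 1)) hminc
      intro D
      have h5 : HasFDerivAt (fun M : Matrix (Fin (d (L + 2))) (Fin (d 1)) ℝ =>
          g ((mulRightCLM T) M)) ((fderiv ℝ g ((mulRightCLM T) S)).comp (mulRightCLM T)) S :=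
        ((hg _).hasFDerivAt).comp _ (mulRightCLM T).hasFDerivAt
      have h6 := h5.fderiv
      rw [h6] at hz
      have h7 := congrArg (fun (T' : Matrix (Fin (d (L + 2))) (Fin (d 1)) ℝ →L[ℝ] ℝ) => T' D) hz
      simp only [ContinuousLinearMap.comp_apply, ContinuousLinearMap.zero_apply,
        mulRightCLM_apply] at h7
      rw [hST] at h7
      exact h7
    -- Step 4 : rank ones vanish
    have hrank1 : ∀ (u : Fin (d (L + 2)) → ℝ) (v : Fin (d 0) → ℝ),
        G (Matrix.vecMulVec u v) = 0 := by
      intro u v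
      set t : ℝ := ε' / 2 / (‖v‖ + 1) with htdef
      have htpos : 0 < t := by positivity
      set c : Fin (d 0) → ℝ := t • v with hcdef
      have hcnorm : ‖c‖ < ε' := by
        rw [hcdef, norm_smul, Real.norm_eq_abs, abs_of_pos htpos]
        have h1 : t * ‖v‖ < t * (‖v‖ + 1) := by
          apply mul_lt_mul_of_pos_left _ htpos
          linarith
        have h2 : t * (‖v‖ + 1) = ε' / 2 := by
          rw [htdef]
          field_simp
        have : ε' / 2 < ε' := by linarith
        linarith
      set D : Matrix (Fin (d (L + 2))) (Fin (d 1)) ℝ :=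
        Matrix.of (fun i β => u i * (w β / (∑ γ, w γ * w γ))) with hDdef
      have hDw : D *ᵥ w = u := by
        funext i
        show ∑ β, u i * (w β / (∑ γ, w γ * w γ)) * w β = u i
        rw [show ∑ β, u i * (w β / (∑ γ, w γ * w γ)) * w β
            = (∑ β, w β * w β) / (∑ γ, w γ * w γ) * u i from by
          rw [Finset.sum_div, Finset.sum_mul]
          exact Finset.sum_congr rfl fun β _ => by ring]
        rw [div_self hwdot, one_mul]
      have h1 := hsub c hcnorm D
      have h0 := hsub 0 (by simpa using hε'pos) D
      have h00 : Matrix.vecMulVec w (0 : Fin (d 0) → ℝ) = 0 := vecMulVec_zero_right w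
      rw [h00, add_zero] at h0
      rw [Matrix.mul_add, mul_vecMulVec, map_add, h0, zero_add, hDw] at h1
      rw [hcdef, smul_vecMulVec_right, G.map_smul, smul_eq_mul] at h1
      rcases mul_eq_zero.mp h1 with h | h
      · exact absurd h (ne_of_gt htpos)
      · exact h
    exact hG0 (zero_of_vecMulVec_zero G hrank1)

noncomputable def mulVecCLM {a b : ℕ} (v : Fin b → ℝ) :
    Matrix (Fin a) (Fin b) ℝ →L[ℝ] (Fin a → ℝ) :=
  LinearMap.toContinuousLinearMap
    { toFun := fun M => M *ᵥ v
      map_add' := fun M N => Matrix.add_mulVec M N v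
      map_smul' := fun t M => Matrix.smul_mulVec t M v }

@[simp] lemma mulVecCLM_apply {a b : ℕ} (v : Fin b → ℝ) (M : Matrix (Fin a) (Fin b) ℝ) :
    mulVecCLM v M = M *ᵥ v := rfl

theorem main {α : Type*}
    (d : ℕ → ℕ) (L : ℕ)
    (hbot : ∀ k, k ≤ L + 1 → min (d 0) (d (L + 1)) ≤ d k)
    (N : ℕ) (x : Fin N → Fin (d 0) → ℝ) (y : Fin N → α)
    (ℓ : α → (Fin (d (L + 1)) → ℝ) → ℝ)
    (hconv : ∀ a, ConvexOn ℝ Set.univ (ℓ a))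
    (hdiff : ∀ a, Differentiable ℝ (ℓ a))
    (W : (k : ℕ) → Fin (d (k + 1)) → Fin (d k) → ℝ)
    (hlocmin : ∃ ε > (0 : ℝ), ∀ W' : (k : ℕ) → Fin (d (k + 1)) → Fin (d k) → ℝ,
      (∀ k, k ≤ L → ∀ i j, |W' k i j - W k i j| < ε) →
      (∑ i, ℓ (y i) ((matProd d W L).mulVec (x i))) ≤
        (∑ i, ℓ (y i) ((matProd d W' L).mulVec (x i)))) :
    ∀ W' : (k : ℕ) → Fin (d (k + 1)) → Fin (d k) → ℝ,
      (∑ i, ℓ (y i) ((matProd d W L).mulVec (x i))) ≤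
        (∑ i, ℓ (y i) ((matProd d W' L).mulVec (x i))) := by
  classical
  obtain ⟨ε, hε, hloc⟩ := hlocmin
  set g : Matrix (Fin (d (L + 1))) (Fin (d 0)) ℝ → ℝ :=
    fun A => ∑ i, ℓ (y i) ((mulVecCLM (x i)) A) with hgdef
  have hgapp : ∀ A : Matrix (Fin (d (L + 1))) (Fin (d 0)) ℝ,
      g A = ∑ i, ℓ (y i) (A *ᵥ (x i)) := fun A => rfl
  have hg : Differentiable ℝ g := by
    apply Differentiable.fun_sum
    intro i _
    exact (hdiff (y i)).comp (mulVecCLM (x i)).differentiable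
  have hmin' : ∀ X : (k : ℕ) → Fin (d (k + 1)) → Fin (d k) → ℝ,
      (∀ k, k ≤ L → ∀ i j, |X k i j - W k i j| < ε) →
      g (matProd d W L) ≤ g (matProd d X L) := fun X hX => hloc X hX
  have hG : fderiv ℝ g (matProd d W L) = 0 := by
    rcases le_or_gt (d 0) (d (L + 1)) with hcase | hcase
    · refine coreA d L (fun k h1 h2 => ?_) g hg W ε hε hmin'
      have := hbot k (by omega)
      omega
    · refine coreB L d (fun k h1 h2 => ?_) g hg W ε hε hmin'
      have := hbot k (by omega)
      omega
  intro W'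
  set A := matProd d W L with hA
  set B := matProd d W' L with hB
  show g A ≤ g B
  set φ : ℝ → ℝ := fun t => g (A + t • (B - A)) with hφdef
  have hψ : HasDerivAt (fun t : ℝ => A + t • (B - A)) (B - A) 0 := by
    have h1 : HasDerivAt (fun t : ℝ => t • (B - A)) ((1 : ℝ) • (B - A)) 0 :=
      (hasDerivAt_id 0).smul_const (B - A)
    rw [one_smul] at h1
    exact h1.const_add A
  have hψ0 : A + (0 : ℝ) • (B - A) = A := by rw [zero_smul, add_zero]
  have hφ : HasDerivAt φ 0 0 := by
    have h2 : HasFDerivAt g (fderiv ℝ g A) (A + (0 : ℝ) • (B - A)) := by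
      rw [hψ0]
      exact (hg A).hasFDerivAt
    have h3 := h2.comp_hasDerivAt 0 hψ
    rw [hG] at h3
    exact h3
  have hline : ∀ t, t ∈ Set.Icc (0 : ℝ) 1 → φ t ≤ φ 0 + t * (φ 1 - φ 0) := by
    intro t ht
    have hconvex : ∀ M1 M2 : Matrix (Fin (d (L + 1))) (Fin (d 0)) ℝ,
        g ((1 - t) • M1 + t • M2) ≤ (1 - t) * g M1 + t * g M2 := by
      intro M1 M2
      rw [hgapp, hgapp, hgapp]
      have key : ∀ i, ((1 - t) • M1 + t • M2) *ᵥ (x i)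
          = (1 - t) • (M1 *ᵥ x i) + t • (M2 *ᵥ x i) := by
        intro i
        rw [Matrix.add_mulVec, Matrix.smul_mulVec, Matrix.smul_mulVec]
      calc ∑ i, ℓ (y i) (((1 - t) • M1 + t • M2) *ᵥ x i)
          ≤ ∑ i, ((1 - t) * ℓ (y i) (M1 *ᵥ x i) + t * ℓ (y i) (M2 *ᵥ x i)) := by
            apply Finset.sum_le_sum
            intro i _
            rw [key i]
            have := (hconv (y i)).2 (Set.mem_univ (M1 *ᵥ x i)) (Set.mem_univ (M2 *ᵥ x i))
              (by linarith [ht.2] : (0:ℝ) ≤ 1 - t) ht.1 (by ring)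
            simpa using this
        _ = (1 - t) * (∑ i, ℓ (y i) (M1 *ᵥ x i)) + t * (∑ i, ℓ (y i) (M2 *ᵥ x i)) := by
            rw [Finset.sum_add_distrib, Finset.mul_sum, Finset.mul_sum]
    have hpt : A + t • (B - A) = (1 - t) • A + t • B := by
      rw [sub_smul, one_smul, smul_sub]
      abel
    have h4 : φ t ≤ (1 - t) * φ 0 + t * φ 1 := by
      rw [hφdef]
      simp only []
      rw [hpt]
      have h5 := hconvex A B
      have h6 : A + (0:ℝ) • (B - A) = A := hψ0
      have h7 : A + (1:ℝ) • (B - A) = B := by rw [one_smul]; abel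
      rw [h6, h7]
      exact h5
    nlinarith [h4]
  have hfinal : (0 : ℝ) ≤ φ 1 - φ 0 := by
    have hslope := hasDerivAt_iff_tendsto_slope.mp hφ
    have hT : Filter.Tendsto (slope φ 0) (nhdsWithin 0 (Set.Ioi (0:ℝ))) (nhds 0) :=
      hslope.mono_left (nhdsWithin_mono 0 (fun s hs => Set.mem_compl_singleton_iff.mpr
        (ne_of_gt hs)))
    have hbound : ∀ᶠ s in nhdsWithin 0 (Set.Ioi (0:ℝ)), slope φ 0 s ≤ φ 1 - φ 0 := by
      filter_upwards [Ioo_mem_nhdsGT_of_mem (show (0:ℝ) ∈ Set.Ico (0:ℝ) 1 by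
        constructor <;> norm_num)] with s hs
      have h8 := hline s ⟨le_of_lt hs.1, le_of_lt hs.2⟩
      rw [slope_def_field, sub_zero, div_le_iff₀ hs.1]
      nlinarith [h8]
    exact le_of_tendsto hT hbound
  have h9 : φ 0 = g A := by rw [hφdef]; simp only []; rw [hψ0]
  have h10 : φ 1 = g B := by
    rw [hφdef]; simp only []
    rw [show A + (1:ℝ) • (B - A) = B from by rw [one_smul]; abel]
  rw [← h9, ← h10]
  linarith

end LocGlob


/-- Theorem (Laurent–von Brecht): for a deep linear network with a loss `ℓ(y, z)` that
is convex and differentiable in `z`, if the architecture has no bottleneck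
(`min_k n_k = min{n₀, n_{L+1}}`), every local minimum of the training loss is global. -/
theorem linear_net_local_minima_are_global {α : Type*}
    (d : ℕ → ℕ) (L : ℕ)
    (hbot : ∀ k, k ≤ L + 1 → min (d 0) (d (L + 1)) ≤ d k)
    (N : ℕ) (x : Fin N → Fin (d 0) → ℝ) (y : Fin N → α)
    (ℓ : α → (Fin (d (L + 1)) → ℝ) → ℝ)
    (hconv : ∀ a, ConvexOn ℝ Set.univ (ℓ a))
    (hdiff : ∀ a, Differentiable ℝ (ℓ a))
    (W : (k : ℕ) → Fin (d (k + 1)) → Fin (d k) → ℝ)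
    (hlocmin : ∃ ε > (0 : ℝ), ∀ W' : (k : ℕ) → Fin (d (k + 1)) → Fin (d k) → ℝ,
      (∀ k, k ≤ L → ∀ i j, |W' k i j - W k i j| < ε) →
      linNetLoss d L x y ℓ W ≤ linNetLoss d L x y ℓ W') :
    ∀ W' : (k : ℕ) → Fin (d (k + 1)) → Fin (d k) → ℝ,
      linNetLoss d L x y ℓ W ≤ linNetLoss d L x y ℓ W' :=
  LocGlob.main d L hbot N x y ℓ hconv hdiff W hlocmin
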